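/- For n ≥ 4, the signless Laplacian spectral radius of S_{n,2n-2} = K₂ ∨ (K_{1,1} ∪ (n-4)K₁) satisfies q(S_{n,2n-2}) ≥ n + 1.6. -/

import Mathlib

open Matrix SimpleGraph

noncomputable def signlessLaplacian {n : ℕ} (G : SimpleGraph (Fin n)) :
    Matrix (Fin n) (Fin n) ℝ :=
  letI := Classical.decRel G.Adj
  Matrix.diagonal (fun v => (G.degree v : ℝ)) + G.adjMatrix ℝ

def IsMaxEigenvalue {n : ℕ} (M : Matrix (Fin n) (Fin n) ℝ) (q : ℝ) : Prop :=
  (∃ x : Fin n → ℝ, x ≠ 0 ∧ M.mulVec x = q • x) ∧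
  ∀ (μ : ℝ) (x : Fin n → ℝ), x ≠ 0 → M.mulVec x = μ • x → μ ≤ q

/-- The quasi-star graph `S_{n,2n-2} = K₂ ∨ (K_{1,1} ∪ (n-4)K₁)`:
vertices `0,1` are universal, and `2,3` are joined by an edge. -/
def quasiStar2n2 (n : ℕ) : SimpleGraph (Fin n) :=
  SimpleGraph.fromRel (fun a b => a.val < 2 ∨ (a.val < 4 ∧ b.val < 4))

lemma signlessLaplacian_mulVec {n : ℕ} (G : SimpleGraph (Fin n)) (x : Fin n → ℝ) (v : Fin n) :
    letI := Classical.decRel G.Adj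
    (signlessLaplacian G).mulVec x v = ∑ u ∈ G.neighborFinset v, (x v + x u) := by
  letI := Classical.decRel G.Adj
  show ((Matrix.diagonal (fun v => (G.degree v : ℝ)) + G.adjMatrix ℝ).mulVec x) v = _
  rw [Matrix.add_mulVec, Pi.add_apply, Matrix.mulVec_diagonal,
      SimpleGraph.adjMatrix_mulVec_apply, Finset.sum_add_distrib, Finset.sum_const,
      nsmul_eq_mul, SimpleGraph.degree]


theorem stmt17 {n : ℕ} (hn : 4 ≤ n)
    (q : ℝ) (hq : IsMaxEigenvalue (signlessLaplacian (quasiStar2n2 n)) q) :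
    (n : ℝ) + 1.6 ≤ q := by
  classical
  obtain ⟨-, hmax⟩ := hq
  have hN : (4:ℝ) ≤ (n:ℝ) := by exact_mod_cast hn
  set N : ℝ := (n:ℝ) with hNdef
  set f : ℝ → ℝ := fun μ => (N-μ)*(4-μ)*(2-μ) - 4*(2-μ) - 2*(N-4)*(4-μ) with hf
  have h1 : 0 ≤ f (N + 1.6) := by
    simp only [hf]; nlinarith [sq_nonneg (N - 5.4)]
  have h2 : f (2*N+8) ≤ 0 := by
    simp only [hf]; nlinarith [sq_nonneg N]
  obtain ⟨μ, hμmem, hμ0⟩ : ∃ μ ∈ Set.Icc (N+1.6) (2*N+8), f μ = 0 := by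
    have hab : N + 1.6 ≤ 2*N + 8 := by linarith
    have hc : ContinuousOn f (Set.Icc (N+1.6) (2*N+8)) :=
      (by simp only [hf]; continuity : Continuous f).continuousOn
    obtain ⟨μ, hm, he⟩ := intermediate_value_Icc' hab hc ⟨h2, h1⟩
    exact ⟨μ, hm, he⟩
  obtain ⟨hμlo, -⟩ := hμmem
  have hμ4 : (0:ℝ) < μ - 4 := by linarith
  have hμ2 : (0:ℝ) < μ - 2 := by linarith
  set b : ℝ := 2/(μ-4) with hb
  set c : ℝ := 2/(μ-2) with hc
  set y : ℕ → ℝ := fun i => if i < 2 then 1 else if i < 4 then b else c with hy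
  set x : Fin n → ℝ := fun v => y v.val with hx
  have hx0 : x ≠ 0 := by
    intro h
    have h0 : x ⟨0, by omega⟩ = 0 := by rw [h]; rfl
    simp [hx, hy] at h0
  have hadj : ∀ a w : Fin n, (quasiStar2n2 n).Adj a w ↔
      (a.val ≠ w.val ∧ (a.val < 2 ∨ w.val < 2 ∨ (a.val < 4 ∧ w.val < 4))) := by
    intro a w
    rw [quasiStar2n2, SimpleGraph.fromRel_adj, ne_eq, ← Fin.val_eq_val]
    constructor
    · rintro ⟨h, h2⟩; exact ⟨h, by omega⟩
    · rintro ⟨h, h2⟩; exact ⟨h, by omega⟩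
  -- sum over range 4 and tail
  have hy1 : ∀ i, i < 2 → y i = 1 := fun i hi => by
    simp only [hy]; rw [if_pos hi]
  have hybe : ∀ i, 2 ≤ i → i < 4 → y i = b := fun i hi hi' => by
    simp only [hy]; rw [if_neg (by omega), if_pos hi']
  have hyc : ∀ i, 4 ≤ i → y i = c := fun i hi => by
    simp only [hy]; rw [if_neg (by omega), if_neg (by omega)]
  have hIcoC : ∀ (g : ℕ → ℝ) (cst : ℝ), (∀ i, 4 ≤ i → i < n → g i = cst) →
      ∑ i ∈ Finset.Ico 4 n, g i = ((n:ℝ) - 4) * cst := by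
    intro g cst hg
    have h1 : ∑ i ∈ Finset.Ico 4 n, g i = ∑ _i ∈ Finset.Ico 4 n, cst :=
      Finset.sum_congr rfl fun i hi =>
        hg i (Finset.mem_Ico.mp hi).1 (Finset.mem_Ico.mp hi).2
    rw [h1, Finset.sum_const, Nat.card_Ico, nsmul_eq_mul]
    rw [Nat.cast_sub hn]; norm_num
  have hsplit : ∀ g : ℕ → ℝ,
      ∑ i ∈ Finset.range n, g i = ∑ i ∈ Finset.range 4, g i + ∑ i ∈ Finset.Ico 4 n, g i := by
    intro g
    rw [Finset.range_eq_Ico, ← Finset.sum_Ico_consecutive g (by omega : 0 ≤ 4) hn,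
        ← Finset.range_eq_Ico]
  have key : (signlessLaplacian (quasiStar2n2 n)).mulVec x = μ • x := by
    funext v
    rw [signlessLaplacian_mulVec]
    rw [SimpleGraph.neighborFinset_eq_filter, Finset.sum_filter]
    have hstep : ∑ u : Fin n, (if (quasiStar2n2 n).Adj v u then x v + x u else 0)
        = ∑ i ∈ Finset.range n,
            (if (v.val ≠ i ∧ (v.val < 2 ∨ i < 2 ∨ (v.val < 4 ∧ i < 4)))
              then y v.val + y i else 0) := by
      rw [← Fin.sum_univ_eq_sum_range
        (fun i => if (v.val ≠ i ∧ (v.val < 2 ∨ i < 2 ∨ (v.val < 4 ∧ i < 4)))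
          then y v.val + y i else 0) n]
      exact Finset.sum_congr rfl fun u _ => by
        rw [if_congr (hadj v u) rfl rfl]
    rw [hstep]
    have hxv : x v = y v.val := rfl
    rcases lt_or_ge v.val 2 with hv2 | hv2
    · -- universal vertex
      have hyk : y v.val = 1 := hy1 v.val hv2
      have hcongr : ∀ i ∈ Finset.range n,
          (if (v.val ≠ i ∧ (v.val < 2 ∨ i < 2 ∨ (v.val < 4 ∧ i < 4)))
            then y v.val + y i else 0)
          = (1 + y i) - (if i = v.val then 1 + y i else 0) := by
        intro i _
        by_cases h : i = v.val
        · subst h; simp [hv2]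
        · rw [if_pos ⟨Ne.symm h, Or.inl hv2⟩, if_neg h, hyk]; ring
      rw [Finset.sum_congr rfl hcongr, Finset.sum_sub_distrib,
          Finset.sum_ite_eq' (Finset.range n) v.val (fun i => 1 + y i),
          if_pos (Finset.mem_range.mpr (by omega : v.val < n))]
      rw [hsplit (fun i => 1 + y i), hIcoC (fun i => 1 + y i) (1 + c)
        (fun i hi _ => by show 1 + y i = 1 + c; rw [hyc i hi])]
      have h4 : ∑ i ∈ Finset.range 4, (1 + y i) = 4 + 2 + 2 * b := by
        simp [Finset.sum_range_succ, hy]; ring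
      rw [h4, Pi.smul_apply, smul_eq_mul, hxv, hyk]
      rw [hb, hc]
      field_simp
      simp only [hf] at hμ0
      nlinarith [hμ0, hμ4, hμ2]
    · rcases lt_or_ge v.val 4 with hv4 | hv4
      · -- vertex 2 or 3
        have hyk : y v.val = b := hybe v.val hv2 hv4
        have hcongr : ∀ i ∈ Finset.range n,
            (if (v.val ≠ i ∧ (v.val < 2 ∨ i < 2 ∨ (v.val < 4 ∧ i < 4)))
              then y v.val + y i else 0)
            = (if (i < 4 ∧ i ≠ v.val) then b + y i else 0) := by
          intro i _
          rw [hyk]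
          exact if_congr (by constructor <;> (rintro ⟨h, h'⟩; constructor <;> omega)) rfl rfl
        rw [Finset.sum_congr rfl hcongr]
        rw [hsplit (fun i => if (i < 4 ∧ i ≠ v.val) then b + y i else 0),
            hIcoC (fun i => if (i < 4 ∧ i ≠ v.val) then b + y i else 0) 0
              (fun i hi _ => by show (if (i < 4 ∧ i ≠ v.val) then b + y i else 0) = 0
                                rw [if_neg (by omega)]), mul_zero, add_zero]
        rw [Pi.smul_apply, smul_eq_mul, hxv, hyk]
        interval_cases h : v.val
        · simp [Finset.sum_range_succ, hy, hb]
          field_simp; ring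
        · simp [Finset.sum_range_succ, hy, hb]
          field_simp; ring
      · -- pendant-type vertex
        have hyk : y v.val = c := hyc v.val hv4
        have hcongr : ∀ i ∈ Finset.range n,
            (if (v.val ≠ i ∧ (v.val < 2 ∨ i < 2 ∨ (v.val < 4 ∧ i < 4)))
              then y v.val + y i else 0)
            = (if i < 2 then c + 1 else 0) := by
          intro i _
          by_cases h : i < 2
          · rw [if_pos ⟨by omega, Or.inr (Or.inl h)⟩, if_pos h, hyk]
            rw [hy1 i h]
          · rw [if_neg (by omega), if_neg h]
        rw [Finset.sum_congr rfl hcongr]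
        rw [hsplit (fun i => if i < 2 then c + 1 else 0),
            hIcoC (fun i => if i < 2 then c + 1 else 0) 0
              (fun i hi _ => by show (if i < 2 then c + 1 else 0) = 0
                                rw [if_neg (by omega)]), mul_zero, add_zero]
        rw [Pi.smul_apply, smul_eq_mul, hxv, hyk]
        have : ∑ i ∈ Finset.range 4, (if i < 2 then c + 1 else 0) = 2 * c + 2 := by
          simp [Finset.sum_range_succ]; ring
        rw [this, hc]
        field_simp; ring
  exact le_trans hμlo (hmax μ x hx0 key)
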